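/- arXiv:1811.04679 — 6 statements merged into one kernel-verified Lean document; each statement's English description precedes it below -/
import Mathlib

section
/- Let S be a monoid and let X, Y be submonoids of S such that every s ∈ S can be written in a unique way as s = xy with x ∈ X and y ∈ Y (S is the internal Zappa–Szép product X ⋈ Y). For y ∈ Y and x ∈ X, define y·x ∈ X and y@x ∈ Y to be the unique elements with yx = (y·x)(y@x). Assume Y is right cancellative (ab = cb implies a = c in Y). If x₁, x₂ ∈ X satisfy y@x₁ = y@x₂ for all y ∈ Y, then for every y ∈ Y and every s ∈ Y one has s@(y·x₁) = s@(y·x₂); that is, y·x₁ and y·x₂ again have the same @-action from every element of Y. -/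
namespace AutGrp

/-- A Mealy automaton with state set `Q` and alphabet `A`:
`step q a = (q · a, q @ a)` (output letter, next state). -/
structure Mealy (Q A : Type*) where
  step : Q → A → A × Q

namespace Mealy

variable {Q A : Type*}

/-- The output letter `q · a`. -/
def o (M : Mealy Q A) (q : Q) (a : A) : A := (M.step q a).1

/-- The next state `q @ a`. -/
def t (M : Mealy Q A) (q : Q) (a : A) : Q := (M.step q a).2

/-- Action of a single state on a word of letters: `q · w`. -/
def actA (M : Mealy Q A) : Q → List A → List A
  | _, [] => []
  | q, a :: w => M.o q a :: M.actA (M.t q a) w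

/-- State reached from `q` after reading the word `w`: `q @ w`. -/
def stA (M : Mealy Q A) : Q → List A → Q
  | q, [] => q
  | q, a :: w => M.stA (M.t q a) w

/-- Action of a word of states on a word of letters: `s · u` (rightmost state acts first). -/
def actW (M : Mealy Q A) : List Q → List A → List A
  | [], u => u
  | q :: s, u => M.actA q (M.actW s u)

/-- Word of states reached after reading `u`: `s @ u`. -/
def stW (M : Mealy Q A) : List Q → List A → List Q
  | [], _ => []
  | q :: s, u => M.stA q (M.actW s u) :: M.stW s u

/-- `M` is invertible if each state acts on `A` by a bijection. -/
def Invertible (M : Mealy Q A) : Prop := ∀ q : Q, Function.Bijective (M.o q)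

/-- `M` is reversible if each letter acts on `Q` by a bijection. -/
def Reversible (M : Mealy Q A) : Prop := ∀ a : A, Function.Bijective (fun q => M.t q a)

theorem actA_append (M : Mealy Q A) (q : Q) (x y : List A) :
    M.actA q (x ++ y) = M.actA q x ++ M.actA (M.stA q x) y := by
  induction x generalizing q with
  | nil => simp [actA, stA]
  | cons a w ih => simp [actA, stA, ih]

theorem stA_append (M : Mealy Q A) (q : Q) (x y : List A) :
    M.stA q (x ++ y) = M.stA (M.stA q x) y := by
  induction x generalizing q with
  | nil => simp [stA]
  | cons a w ih => simp [stA, ih]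

theorem actW_append_states (M : Mealy Q A) (s u : List Q) (w : List A) :
    M.actW (s ++ u) w = M.actW s (M.actW u w) := by
  induction s with
  | nil => simp [actW]
  | cons q s ih => simp [actW, ih]

theorem actW_append (M : Mealy Q A) (s : List Q) (x y : List A) :
    M.actW s (x ++ y) = M.actW s x ++ M.actW (M.stW s x) y := by
  induction s with
  | nil => simp [actW, stW]
  | cons q s ih => simp [actW, stW, ih, actA_append]

theorem stW_append (M : Mealy Q A) (s : List Q) (x y : List A) :
    M.stW s (x ++ y) = M.stW (M.stW s x) y := by
  induction s with
  | nil => simp [stW]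
  | cons q s ih => simp [stW, actW, ih, actW_append, stA_append]

theorem actW_stW_congr (M : Mealy Q A) {p p' : List Q}
    (h : ∀ w : List A, M.actW p w = M.actW p' w) (u w : List A) :
    M.actW (M.stW p u) w = M.actW (M.stW p' u) w := by
  have h1 := M.actW_append p u w
  have h2 := M.actW_append p' u w
  rw [h u, h (u ++ w)] at h1
  rw [h1] at h2
  exact List.append_cancel_left h2

/-- The congruence `~Q` on the free monoid `Q*`: two words of states are equivalent
iff they act identically on `A*`. -/
def conQ (M : Mealy Q A) : Con (FreeMonoid Q) where
  r s u := ∀ w : List A, M.actW s.toList w = M.actW u.toList w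
  iseqv := ⟨fun _ _ => rfl, fun h w => (h w).symm, fun h1 h2 w => (h1 w).trans (h2 w)⟩
  mul' := by
    intro a b c d h1 h2 w
    simp only [FreeMonoid.toList_mul, actW_append_states]
    rw [h2 w, h1 (M.actW d.toList w)]

/-- The congruence `~A` on the free monoid `A*`: `u ~A v` iff `s @ u = s @ v` for all `s ∈ Q*`. -/
def conA (M : Mealy Q A) : Con (FreeMonoid A) where
  r u v := ∀ s : List Q, M.stW s u.toList = M.stW s v.toList
  iseqv := ⟨fun _ _ => rfl, fun h s => (h s).symm, fun h1 h2 s => (h1 s).trans (h2 s)⟩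
  mul' := by
    intro a b c d h1 h2 s
    simp only [FreeMonoid.toList_mul, stW_append]
    rw [h1 s, h2 (M.stW s b.toList)]

/-- The congruence `~D` on the free monoid `A*`: `u ~D v` iff `s @ u ~Q s @ v` for all `s ∈ Q*`. -/
def conD (M : Mealy Q A) : Con (FreeMonoid A) where
  r u v := ∀ (s : List Q) (w : List A),
    M.actW (M.stW s u.toList) w = M.actW (M.stW s v.toList) w
  iseqv := ⟨fun _ _ _ => rfl, fun h s w => (h s w).symm,
    fun h1 h2 s w => (h1 s w).trans (h2 s w)⟩
  mul' := by
    intro a b c d h1 h2 s w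
    simp only [FreeMonoid.toList_mul, stW_append]
    calc M.actW (M.stW (M.stW s a.toList) c.toList) w
        = M.actW (M.stW (M.stW s b.toList) c.toList) w :=
          M.actW_stW_congr (h1 s) c.toList w
      _ = M.actW (M.stW (M.stW s b.toList) d.toList) w := h2 _ w

/-- The automaton semigroup (monoid) `P_M = Q* / ~Q`. -/
abbrev PM (M : Mealy Q A) : Type _ := M.conQ.Quotient

/-- The dual automaton semigroup (monoid) `D_M = A* / ~A`. -/
abbrev DM (M : Mealy Q A) : Type _ := M.conA.Quotient

/-- The monoid `D'_M = A* / ~D`. -/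
abbrev DM' (M : Mealy Q A) : Type _ := M.conD.Quotient

/-- The class in `P_M` of a word of states. -/
def PMmk (M : Mealy Q A) (s : List Q) : M.PM := M.conQ.mk' (FreeMonoid.ofList s)

/-- The class in `D_M` of a word of letters. -/
def DMmk (M : Mealy Q A) (u : List A) : M.DM := M.conA.mk' (FreeMonoid.ofList u)

/-- The class in `D'_M` of a word of letters. -/
def DM'mk (M : Mealy Q A) (u : List A) : M.DM' := M.conD.mk' (FreeMonoid.ofList u)

/-- `M` is self-invertible if `P_M` is a group. -/
def SelfInvertible (M : Mealy Q A) : Prop :=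
  ∀ x : M.PM, ∃ y : M.PM, x * y = 1 ∧ y * x = 1

/-- The enriched automaton of an invertible automaton: states `Q ⊕ Q`, where `Sum.inl q` is `q`
and `Sum.inr q` is the formal inverse `q⁻¹`; `τ̃(q,a) = τ(q,a)` and
`τ̃(q⁻¹, q·a) = (a, (q@a)⁻¹)`. -/
noncomputable def enriched [Nonempty A] (M : Mealy Q A) : Mealy (Q ⊕ Q) A where
  step := fun p b =>
    match p with
    | Sum.inl q => (M.o q b, Sum.inl (M.t q b))
    | Sum.inr q =>
        (Function.invFun (M.o q) b, Sum.inr (M.t q (Function.invFun (M.o q) b)))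

/-- The monoid `Δ_M` presented by generators `Q ⊔ A` and relations `q a = (q·a)(q@a)`. -/
def deltaCon (M : Mealy Q A) : Con (FreeMonoid (Q ⊕ A)) :=
  conGen (fun w₁ w₂ => ∃ (q : Q) (a : A),
    w₁ = FreeMonoid.of (Sum.inl q) * FreeMonoid.of (Sum.inr a) ∧
    w₂ = FreeMonoid.of (Sum.inr (M.o q a)) * FreeMonoid.of (Sum.inl (M.t q a)))

end Mealy

/-- Evaluation of a positive word in the letters `y` (for `true`) and `z` (for `false`). -/
def evalPair {S : Type*} [Monoid S] (y z : S) : List Bool → S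
  | [] => 1
  | b :: l => (bif b then y else z) * evalPair y z l

/-- `y` and `z` freely generate a free subsemigroup of rank two: distinct nonempty
positive words in `y, z` represent distinct elements. -/
def IsFreePair {S : Type*} [Monoid S] (y z : S) : Prop :=
  ∀ l₁ l₂ : List Bool, l₁ ≠ [] → l₂ ≠ [] →
    evalPair y z l₁ = evalPair y z l₂ → l₁ = l₂

/-- `x` has infinite order: `{x, x², x³, …}` is infinite. -/
def InfiniteOrder {S : Type*} [Monoid S] (x : S) : Prop :=
  (Set.range fun n : ℕ => x ^ (n + 1)).Infinite

/-- The length-`n` prefix of a sequence. -/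
def seqTake {A : Type*} (ξ : ℕ → A) (n : ℕ) : List A := (List.range n).map ξ

/-- The `n`-th power `u^n` of a finite word. -/
def wpow {A : Type*} (u : List A) : ℕ → List A
  | 0 => []
  | n + 1 => u ++ wpow u n

/-- The eventually periodic sequence `u v v v ⋯`. -/
noncomputable def prePeriodic {A : Type*} [Nonempty A] (u v : List A) : ℕ → A :=
  fun n => if n < u.length then u.getD n (Classical.arbitrary A)
    else v.getD ((n - u.length) % v.length) (Classical.arbitrary A)

/-- The periodic sequence `u^ω = u u u ⋯`. -/
noncomputable def periodic {A : Type*} [Nonempty A] (u : List A) : ℕ → A :=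
  prePeriodic [] u

namespace Mealy

/-- The action of a word of states on a sequence: `s · ξ` is the sequence whose
length-`n` prefix is `s · (length-`n` prefix of `ξ`)`. -/
noncomputable def actSeq {Q A : Type*} [Nonempty A] (M : Mealy Q A)
    (s : List Q) (ξ : ℕ → A) : ℕ → A :=
  fun n => (M.actW s (seqTake ξ (n + 1))).getD n (Classical.arbitrary A)

/-- The language of all prefixes of the orbit of `a^ω` under `P_M`. -/
def Lan {Q A : Type*} (M : Mealy Q A) (a : A) : Set (List A) :=
  {v | ∃ (k : ℕ) (s : List Q), v = M.actW s (List.replicate k a)}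

/-- The degree of `v` in `Lan(a)`: the number of letters `b` with `v b ∈ Lan(a)`. -/
noncomputable def deg {Q A : Type*} (M : Mealy Q A) (a : A) (v : List A) : ℕ :=
  {b : A | v ++ [b] ∈ M.Lan a}.ncard

end Mealy

/-- A language is regular if it is recognized by a deterministic finite automaton. -/
def IsRegular {A : Type*} (L : Set (List A)) : Prop :=
  ∃ (σ : Type) (_ : Fintype σ) (dfa : DFA A σ), ∀ w : List A, w ∈ dfa.accepts ↔ w ∈ L


/-- In an internal Zappa–Szép product `S = X ⋈ Y` with `Y` right cancellative,
if `x₁, x₂ ∈ X` have the same `@`-action from every element of `Y`, then so do `y·x₁` and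
`y·x₂` for every `y ∈ Y`. -/
theorem stmt4 {S : Type*} [Monoid S] (X Y : Submonoid S)
    (hfac : ∀ s : S, ∃! p : X × Y, s = (p.1 : S) * (p.2 : S))
    (dot : Y → X → X) (at' : Y → X → Y)
    (hda : ∀ (y : Y) (x : X), (y : S) * (x : S) = ((dot y x : S)) * ((at' y x : S)))
    (hY : ∀ a b c : Y, a * b = c * b → a = c)
    (x₁ x₂ : X) (h : ∀ y : Y, at' y x₁ = at' y x₂) :
    ∀ (y s : Y), at' s (dot y x₁) = at' s (dot y x₂) := by
  intro y s
  have key : ∀ x : X, at' (s * y) x = at' s (dot y x) * at' y x := by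
    intro x
    have hu := hfac ((s : S) * (y : S) * (x : S))
    have h1 : (s : S) * (y : S) * (x : S) =
        ((dot (s * y) x : X) : S) * ((at' (s * y) x : Y) : S) := by
      have := hda (s * y) x
      simpa [mul_assoc] using this
    have h2 : (s : S) * (y : S) * (x : S) =
        ((dot s (dot y x) : X) : S) * ((at' s (dot y x) * at' y x : Y) : S) := by
      have hy := hda y x
      have hs := hda s (dot y x)
      push_cast
      rw [mul_assoc, hy, ← mul_assoc, hs, mul_assoc]
    have e1 : ((dot (s * y) x, at' (s * y) x) : X × Y) =
        (dot s (dot y x), at' s (dot y x) * at' y x) := hu.unique h1 h2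
    exact congrArg Prod.snd e1
  have k1 := key x₁
  have k2 := key x₂
  rw [h (s * y), h y] at k1
  rw [k2] at k1
  exact (hY _ _ _ k1.symm)


end AutGrp
end

section
/- Let M = (Q, A, τ) be a Mealy automaton and let Δ_M be the monoid presented by the generating set Q ⊔ A subject to the relations qa = (q·a)(q@a) for all q ∈ Q and a ∈ A. Then the map from A* × Q* to Δ_M sending a pair (a₁a₂…a_k, q₁q₂…q_l) to the image in Δ_M of the word a₁a₂…a_k q₁q₂…q_l is a bijection; that is, every element of Δ_M has a unique normal form consisting of a word in A followed by a word in Q, so Δ_M is the internal Zappa–Szép product of the free monoids A* and Q*. -/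
namespace AutGrp

namespace Mealy
variable {Q A : Type*}

theorem actA_nil (M : Mealy Q A) (q : Q) : M.actA q [] = [] := rfl
theorem stA_nil (M : Mealy Q A) (q : Q) : M.stA q [] = q := rfl

theorem actW_nil (M : Mealy Q A) (s : List Q) : M.actW s [] = [] := by
  induction s with
  | nil => rfl
  | cons q s ih => simp [actW, ih, actA]

theorem stW_nil (M : Mealy Q A) (s : List Q) : M.stW s [] = s := by
  induction s with
  | nil => rfl
  | cons q s ih => simp [stW, actW_nil, ih, stA]

theorem stW_append_states (M : Mealy Q A) (s t : List Q) (w : List A) :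
    M.stW (s ++ t) w = M.stW s (M.actW t w) ++ M.stW t w := by
  induction s with
  | nil => simp [stW]
  | cons q s ih => simp [stW, actW_append_states, ih]

/-- Zappa–Szép multiplication on `List A × List Q`. -/
def zmul (M : Mealy Q A) (p r : List A × List Q) : List A × List Q :=
  (p.1 ++ M.actW p.2 r.1, M.stW p.2 r.1 ++ r.2)

theorem zmul_assoc (M : Mealy Q A) (p r s : List A × List Q) :
    M.zmul (M.zmul p r) s = M.zmul p (M.zmul r s) := by
  simp [zmul, actW_append, stW_append, actW_append_states, stW_append_states]

theorem one_zmul (M : Mealy Q A) (p : List A × List Q) : M.zmul ([], []) p = p := by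
  simp [zmul, actW, stW]

/-- Generator images. -/
def gen (M : Mealy Q A) : Q ⊕ A → List A × List Q
  | Sum.inl q => ([], [q])
  | Sum.inr a => ([a], [])

/-- Normal form of a list of generators. -/
def nfL (M : Mealy Q A) : List (Q ⊕ A) → List A × List Q
  | [] => ([], [])
  | x :: l => M.zmul (M.gen x) (M.nfL l)

theorem nfL_append (M : Mealy Q A) (l₁ l₂ : List (Q ⊕ A)) :
    M.nfL (l₁ ++ l₂) = M.zmul (M.nfL l₁) (M.nfL l₂) := by
  induction l₁ with
  | nil => simp [nfL, one_zmul]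
  | cons x l ih => simp [nfL, ih, zmul_assoc]

theorem nfL_embed (M : Mealy Q A) (u : List A) (s : List Q) :
    M.nfL (u.map Sum.inr ++ s.map Sum.inl) = (u, s) := by
  induction u with
  | nil =>
    induction s with
    | nil => rfl
    | cons q s ih =>
      simp only [List.map_nil, List.nil_append, List.map_cons, nfL, gen] at *
      simp [ih, zmul, actW, stW, actA_nil, stA_nil]
  | cons a u ih =>
    simp only [List.map_cons, List.cons_append, nfL, gen]
    simp [ih, zmul, actW, stW]

/-- The congruence of having equal normal forms. -/
def nfCon (M : Mealy Q A) : Con (FreeMonoid (Q ⊕ A)) where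
  r w₁ w₂ := M.nfL w₁.toList = M.nfL w₂.toList
  iseqv := ⟨fun _ => rfl, fun h => h.symm, fun h₁ h₂ => h₁.trans h₂⟩
  mul' := by
    intro a b c d h₁ h₂
    have h₁' : M.nfL a.toList = M.nfL b.toList := h₁
    have h₂' : M.nfL c.toList = M.nfL d.toList := h₂
    show M.nfL (a * c).toList = M.nfL (b * d).toList
    simp only [FreeMonoid.toList_mul, nfL_append, h₁', h₂']

theorem deltaCon_le_nfCon (M : Mealy Q A) : M.deltaCon ≤ M.nfCon := by
  rw [deltaCon]
  apply Con.conGen_le.2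
  rintro w₁ w₂ ⟨q, a, rfl, rfl⟩
  show M.nfL _ = M.nfL _
  simp [nfL, gen, zmul, actW, stW, actA, stA, actA_nil, stA_nil]

theorem delta_push (M : Mealy Q A) (q : Q) (u : List A) :
    M.deltaCon.mk' (FreeMonoid.of (Sum.inl q) * FreeMonoid.ofList (u.map Sum.inr)) =
      M.deltaCon.mk' (FreeMonoid.ofList ((M.actA q u).map Sum.inr) *
        FreeMonoid.of (Sum.inl (M.stA q u))) := by
  induction u generalizing q with
  | nil => simp [actA_nil, stA_nil]
  | cons a u ih =>
    have hrel : M.deltaCon.mk' (FreeMonoid.of (Sum.inl q) * FreeMonoid.of (Sum.inr a)) =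
        M.deltaCon.mk' (FreeMonoid.of (Sum.inr (M.o q a)) *
          FreeMonoid.of (Sum.inl (M.t q a))) := by
      refine (Con.eq _).2 ?_
      exact ConGen.Rel.of _ _ ⟨q, a, rfl, rfl⟩
    calc M.deltaCon.mk' (FreeMonoid.of (Sum.inl q) *
            FreeMonoid.ofList ((a :: u).map Sum.inr))
        = M.deltaCon.mk' (FreeMonoid.of (Sum.inl q) * FreeMonoid.of (Sum.inr a)) *
            M.deltaCon.mk' (FreeMonoid.ofList (u.map Sum.inr)) := by
          rw [List.map_cons, FreeMonoid.ofList_cons, ← mul_assoc, map_mul]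
      _ = M.deltaCon.mk' (FreeMonoid.of (Sum.inr (M.o q a))) *
            (M.deltaCon.mk' (FreeMonoid.of (Sum.inl (M.t q a)) *
              FreeMonoid.ofList (u.map Sum.inr))) := by
          rw [hrel, map_mul, map_mul, mul_assoc]
      _ = M.deltaCon.mk' (FreeMonoid.of (Sum.inr (M.o q a))) *
            M.deltaCon.mk' (FreeMonoid.ofList ((M.actA (M.t q a) u).map Sum.inr) *
              FreeMonoid.of (Sum.inl (M.stA (M.t q a) u))) := by rw [ih]
      _ = M.deltaCon.mk' (FreeMonoid.ofList ((M.actA q (a :: u)).map Sum.inr) *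
            FreeMonoid.of (Sum.inl (M.stA q (a :: u)))) := by
          rw [← map_mul, ← mul_assoc]
          rfl

theorem mk'_nfL (M : Mealy Q A) (l : List (Q ⊕ A)) :
    M.deltaCon.mk' (FreeMonoid.ofList l) =
      M.deltaCon.mk' (FreeMonoid.ofList
        ((M.nfL l).1.map Sum.inr ++ (M.nfL l).2.map Sum.inl)) := by
  induction l with
  | nil => rfl
  | cons x l ih =>
    obtain ⟨u, s, hus⟩ : ∃ u s, M.nfL l = (u, s) := ⟨_, _, rfl⟩
    rw [FreeMonoid.ofList_cons, map_mul, ih, hus]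
    show _ = M.deltaCon.mk' (FreeMonoid.ofList ((M.zmul (M.gen x) (M.nfL l)).1.map Sum.inr
      ++ (M.zmul (M.gen x) (M.nfL l)).2.map Sum.inl))
    rw [hus]
    cases x with
    | inr a =>
      have hz : M.zmul (M.gen (Sum.inr a)) (u, s) = (a :: u, s) := by
        simp [zmul, gen, actW, stW]
      rw [hz, ← map_mul]
      rfl
    | inl q =>
      have hz : M.zmul (M.gen (Sum.inl q)) (u, s) = (M.actA q u, M.stA q u :: s) := by
        simp [zmul, gen, actW, stW]
      rw [hz]
      calc M.deltaCon.mk' (FreeMonoid.of (Sum.inl q)) *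
              M.deltaCon.mk' (FreeMonoid.ofList (u.map Sum.inr ++ s.map Sum.inl))
          = M.deltaCon.mk' (FreeMonoid.of (Sum.inl q) * FreeMonoid.ofList (u.map Sum.inr)) *
              M.deltaCon.mk' (FreeMonoid.ofList (s.map Sum.inl)) := by
            rw [FreeMonoid.ofList_append, map_mul, map_mul, mul_assoc]
        _ = M.deltaCon.mk' (FreeMonoid.ofList ((M.actA q u).map Sum.inr) *
              FreeMonoid.of (Sum.inl (M.stA q u))) *
              M.deltaCon.mk' (FreeMonoid.ofList (s.map Sum.inl)) := by rw [delta_push]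
        _ = M.deltaCon.mk' (FreeMonoid.ofList ((M.actA q u).map Sum.inr ++
              (M.stA q u :: s).map Sum.inl)) := by
            rw [← map_mul, mul_assoc]
            rfl


end Mealy

/-- The monoid `Δ_M`, presented by generators `Q ⊔ A` and relations
`q a = (q·a)(q@a)`, is the internal Zappa–Szép product of the free monoids `A*` and `Q*`:
the map sending `(a₁…a_k, q₁…q_l)` to the class of the word `a₁…a_k q₁…q_l` is a bijection. -/
theorem stmt5 {Q A : Type*} [Fintype Q] [Nonempty Q] [Fintype A] [Nonempty A]
    (M : Mealy Q A) :
    Function.Bijective (fun p : List A × List Q =>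
      M.deltaCon.mk' (FreeMonoid.ofList (p.1.map Sum.inr ++ p.2.map Sum.inl))) := by
  constructor
  · intro p₁ p₂ h
    have hcon : M.deltaCon (FreeMonoid.ofList (p₁.1.map Sum.inr ++ p₁.2.map Sum.inl))
        (FreeMonoid.ofList (p₂.1.map Sum.inr ++ p₂.2.map Sum.inl)) := (Con.eq _).1 h
    have hnf := M.deltaCon_le_nfCon hcon
    have hnf' : M.nfL (p₁.1.map Sum.inr ++ p₁.2.map Sum.inl) =
        M.nfL (p₂.1.map Sum.inr ++ p₂.2.map Sum.inl) := hnf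
    rw [M.nfL_embed, M.nfL_embed] at hnf'
    exact Prod.ext (congrArg Prod.fst hnf') (congrArg Prod.snd hnf')
  · intro x
    obtain ⟨w, rfl⟩ := M.deltaCon.mk'_surjective x
    refine ⟨M.nfL w.toList, ?_⟩
    have := M.mk'_nfL w.toList
    exact this.symm

end AutGrp
end

section
/- Let M = (Q, A, τ) be an invertible Mealy automaton, let P_M be its automaton semigroup and let P_M̃ be its automaton group (the automaton semigroup of the enriched automaton M̃). Then P_M contains an element of infinite order if and only if P_M̃ contains an element of infinite order. -/
namespace AutGrp

section Stmt7Aux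

/-- Collision of powers implies finite order. -/
theorem not_infiniteOrder_of_collision {S : Type*} [Monoid S] {x : S} {m n : ℕ}
    (hmn : m < n) (he : x ^ (m + 1) = x ^ (n + 1)) : ¬ InfiniteOrder x := by
  have key : ∀ k : ℕ, ∃ j ≤ n, x ^ (k + 1) = x ^ (j + 1) := by
    intro k
    induction k using Nat.strong_induction_on with
    | _ k ih =>
      rcases le_or_gt k n with hk | hk
      · exact ⟨k, hk, rfl⟩
      · have h1 : k + 1 = (k - n) + (n + 1) := by omega
        have h2 : (k - n) + (m + 1) = (k - n + m) + 1 := by omega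
        have hlt : k - n + m < k := by omega
        obtain ⟨j, hj, hje⟩ := ih _ hlt
        refine ⟨j, hj, ?_⟩
        rw [h1, pow_add, ← he, ← pow_add, h2, hje]
  rw [InfiniteOrder, Set.not_infinite]
  apply Set.Finite.subset ((Set.finite_Iic n).image (fun j => x ^ (j + 1)))
  rintro _ ⟨k, rfl⟩
  obtain ⟨j, hj, hje⟩ := key k
  exact ⟨j, hj, hje.symm⟩

theorem exists_collision_of_not_infiniteOrder {S : Type*} [Monoid S] {x : S}
    (h : ¬ InfiniteOrder x) : ∃ m n : ℕ, m < n ∧ x ^ (m + 1) = x ^ (n + 1) := by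
  have hni : ¬ Function.Injective (fun k : ℕ => x ^ (k + 1)) := by
    intro hinj
    exact h (Set.infinite_range_of_injective hinj)
  rw [Function.not_injective_iff] at hni
  obtain ⟨a, b, hab, hne⟩ := hni
  rcases hne.lt_or_gt with hlt | hlt
  · exact ⟨a, b, hlt, hab⟩
  · exact ⟨b, a, hlt, hab.symm⟩

theorem wpow_map {A B : Type*} (f : A → B) (u : List A) (k : ℕ) :
    (wpow u k).map f = wpow (u.map f) k := by
  induction k with
  | zero => rfl
  | succ k ih => simp [wpow, ih]

namespace Mealy

variable {Q A : Type*}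

theorem PMmk_mul (M : Mealy Q A) (s t : List Q) :
    M.PMmk (s ++ t) = M.PMmk s * M.PMmk t := by
  rw [PMmk, PMmk, PMmk, FreeMonoid.ofList_append, map_mul]

theorem PMmk_pow (M : Mealy Q A) (s : List Q) (k : ℕ) :
    M.PMmk (wpow s k) = (M.PMmk s) ^ k := by
  induction k with
  | zero => rfl
  | succ k ih => rw [wpow, PMmk_mul, ih, pow_succ']

theorem PMmk_eq_iff (M : Mealy Q A) (s t : List Q) :
    M.PMmk s = M.PMmk t ↔ ∀ w : List A, M.actW s w = M.actW t w := by
  rw [PMmk, PMmk]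
  exact Con.eq M.conQ

theorem actW_wpow_single (M : Mealy Q A) (p : Q) (k : ℕ) (u : List A) :
    M.actW (wpow [p] k) u = (M.actA p)^[k] u := by
  induction k generalizing u with
  | zero => rfl
  | succ k ih =>
      show M.actA p (M.actW (wpow [p] k) u) = _
      rw [ih]
      exact (Function.iterate_succ_apply' (M.actA p) k u).symm

theorem enr_actA_inl [Nonempty A] (M : Mealy Q A) (q : Q) (u : List A) :
    (M.enriched).actA (Sum.inl q) u = M.actA q u := by
  induction u generalizing q with
  | nil => rfl
  | cons a w ih =>
      show M.o q a :: (M.enriched).actA (Sum.inl (M.t q a)) w = M.o q a :: M.actA (M.t q a) w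
      rw [ih]

theorem enr_actW_inl [Nonempty A] (M : Mealy Q A) (s : List Q) (u : List A) :
    (M.enriched).actW (s.map Sum.inl) u = M.actW s u := by
  induction s with
  | nil => rfl
  | cons q s ih => simp [actW, ih, enr_actA_inl]

theorem enr_actA_inr_actA [Nonempty A] (M : Mealy Q A) (hinv : M.Invertible)
    (q : Q) (u : List A) :
    (M.enriched).actA (Sum.inr q) (M.actA q u) = u := by
  induction u generalizing q with
  | nil => rfl
  | cons a w ih =>
      have hl : Function.invFun (M.o q) (M.o q a) = a :=
        Function.leftInverse_invFun (hinv q).injective a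
      show Function.invFun (M.o q) (M.o q a) ::
          (M.enriched).actA (Sum.inr (M.t q (Function.invFun (M.o q) (M.o q a))))
            (M.actA (M.t q a) w) = a :: w
      rw [hl, ih]

theorem enr_actA_actA_inr [Nonempty A] (M : Mealy Q A) (hinv : M.Invertible)
    (q : Q) (u : List A) :
    M.actA q ((M.enriched).actA (Sum.inr q) u) = u := by
  induction u generalizing q with
  | nil => rfl
  | cons b w ih =>
      have hr : M.o q (Function.invFun (M.o q) b) = b :=
        Function.rightInverse_invFun (hinv q).surjective b
      show M.o q (Function.invFun (M.o q) b) ::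
          M.actA (M.t q (Function.invFun (M.o q) b))
            ((M.enriched).actA (Sum.inr (M.t q (Function.invFun (M.o q) b))) w) = b :: w
      rw [hr, ih]

/-- If `P_M` is torsion, every word over `Q ⊕ Q` acts (in the enriched automaton)
like a positive word. -/
theorem exists_pos_rep [Nonempty A] (M : Mealy Q A) (hinv : M.Invertible)
    (htor : ∀ x : M.PM, ¬ InfiniteOrder x) (w : List (Q ⊕ Q)) :
    ∃ s : List Q, ∀ u : List A,
      (M.enriched).actW w u = (M.enriched).actW (s.map Sum.inl) u := by
  induction w with
  | nil => exact ⟨[], fun _ => rfl⟩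
  | cons p w ih =>
      obtain ⟨s, hs⟩ := ih
      cases p with
      | inl q =>
          refine ⟨q :: s, fun u => ?_⟩
          show (M.enriched).actA (Sum.inl q) ((M.enriched).actW w u) = _
          rw [hs u]; rfl
      | inr q =>
          obtain ⟨m, n, hmn, he⟩ :=
            exists_collision_of_not_infiniteOrder (htor (M.PMmk [q]))
          rw [← PMmk_pow, ← PMmk_pow, PMmk_eq_iff] at he
          have hiter : ∀ u : List A, (M.actA q)^[m + 1] u = (M.actA q)^[n + 1] u := by
            intro u
            have := he u
            rwa [actW_wpow_single, actW_wpow_single] at this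
          set f := M.actA q with hf
          set g := (M.enriched).actA (Sum.inr q) with hg
          have gf : ∀ u, g (f u) = u := M.enr_actA_inr_actA hinv q
          have gfk : ∀ (k : ℕ) (u), g^[k] (f^[k] u) = u := by
            intro k
            induction k with
            | zero => intro u; rfl
            | succ k ihk =>
                intro u
                rw [Function.iterate_succ_apply, Function.iterate_succ_apply' f, gf]
                exact ihk u
          set d := n - m with hd
          have hd1 : 1 ≤ d := by omega
          have hper : ∀ u, f^[d] u = u := by
            intro u
            have h1 : f^[n + 1] u = f^[m + 1] (f^[d] u) := by
              rw [← Function.iterate_add_apply]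
              congr 1
              omega
            have h2 := hiter u
            rw [h1] at h2
            have := gfk (m + 1) (f^[d] u)
            rw [← h2, gfk (m + 1) u] at this
            exact this.symm
          have hgrep : ∀ u, g u = f^[d - 1] u := by
            intro u
            have hstep : f^[d] u = f (f^[d - 1] u) := by
              conv_lhs => rw [show d = (d - 1) + 1 by omega]
              exact Function.iterate_succ_apply' f (d - 1) u
            calc g u = g (f^[d] u) := by rw [hper u]
              _ = g (f (f^[d - 1] u)) := by rw [hstep]
              _ = f^[d - 1] u := gf _
          refine ⟨wpow [q] (d - 1) ++ s, fun u => ?_⟩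
          have key : (M.enriched).actW ((wpow [q] (d - 1) ++ s).map Sum.inl) u
              = f^[d - 1] ((M.enriched).actW (s.map Sum.inl) u) := by
            rw [List.map_append, actW_append_states, wpow_map]
            have h2 : ([q].map (Sum.inl : Q → Q ⊕ Q)) = [Sum.inl q] := rfl
            rw [h2, actW_wpow_single]
            have hfe : (M.enriched).actA (Sum.inl q) = M.actA q :=
              funext (M.enr_actA_inl q)
            rw [hfe]
          show g ((M.enriched).actW w u) = _
          rw [hs u, hgrep, key]

theorem infiniteOrder_transfer [Nonempty A] (M : Mealy Q A) (s : List Q) :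
    InfiniteOrder (M.PMmk s) ↔ InfiniteOrder ((M.enriched).PMmk (s.map Sum.inl)) := by
  have hact : ∀ k : ℕ, ∀ u : List A,
      (M.enriched).actW (wpow (s.map Sum.inl) k) u = M.actW (wpow s k) u := by
    intro k u
    rw [← wpow_map, enr_actW_inl]
  constructor
  · intro h
    by_contra hc
    obtain ⟨m, n, hmn, he⟩ := exists_collision_of_not_infiniteOrder hc
    rw [← PMmk_pow, ← PMmk_pow, PMmk_eq_iff] at he
    refine not_infiniteOrder_of_collision hmn ?_ h
    rw [← PMmk_pow, ← PMmk_pow, PMmk_eq_iff]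
    intro u
    rw [← hact, ← hact, he]
  · intro h
    by_contra hc
    obtain ⟨m, n, hmn, he⟩ := exists_collision_of_not_infiniteOrder hc
    rw [← PMmk_pow, ← PMmk_pow, PMmk_eq_iff] at he
    refine not_infiniteOrder_of_collision hmn ?_ h
    rw [← PMmk_pow, ← PMmk_pow, PMmk_eq_iff]
    intro u
    rw [hact, hact, he]

end Mealy

end Stmt7Aux

/-- For an invertible Mealy automaton `M`, the automaton semigroup `P_M`
contains an element of infinite order iff the automaton group `P_M̃` does. -/
theorem stmt7 {Q A : Type*} [Fintype Q] [Nonempty Q] [Fintype A] [Nonempty A]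
    (M : Mealy Q A) (hinv : M.Invertible) :
    (∃ x : M.PM, InfiniteOrder x) ↔ (∃ x : (M.enriched).PM, InfiniteOrder x) := by
  constructor
  · rintro ⟨x, hx⟩
    obtain ⟨w, rfl⟩ := M.conQ.mk'_surjective x
    have hx' : InfiniteOrder (M.PMmk (FreeMonoid.toList w)) := by
      simpa [Mealy.PMmk, FreeMonoid.ofList_toList] using hx
    exact ⟨_, (M.infiniteOrder_transfer _).mp hx'⟩
  · rintro ⟨y, hy⟩
    by_contra hno
    push_neg at hno
    obtain ⟨w, rfl⟩ := (M.enriched).conQ.mk'_surjective y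
    obtain ⟨s, hs⟩ := M.exists_pos_rep hinv hno (FreeMonoid.toList w)
    have hy' : (M.enriched).PMmk (FreeMonoid.toList w) = (M.enriched).PMmk (s.map Sum.inl) :=
      (Mealy.PMmk_eq_iff _ _ _).mpr hs
    have hinf : InfiniteOrder ((M.enriched).PMmk (s.map Sum.inl)) := by
      rw [← hy']
      simpa [Mealy.PMmk, FreeMonoid.ofList_toList] using hy
    exact hno _ ((M.infiniteOrder_transfer s).mpr hinf)


end AutGrp
end

section
/- Let M = (Q, A, τ) be an invertible Mealy automaton and let V ⊂ A* be a finite set of words. Then for every word s over the enriched state set (Q ⊔ Q⁻¹)*, there exists a word t ∈ Q* such that s·v = t·v for all v ∈ V (actions of the enriched automaton M̃). -/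
namespace AutGrp

namespace Mealy

variable {Q A : Type*}

theorem actA_length (M : Mealy Q A) (q : Q) (w : List A) :
    (M.actA q w).length = w.length := by
  induction w generalizing q with
  | nil => rfl
  | cons a w ih => simp [actA, ih]

theorem actW_length (M : Mealy Q A) (s : List Q) (w : List A) :
    (M.actW s w).length = w.length := by
  induction s with
  | nil => rfl
  | cons q s ih => simp [actW, actA_length, ih]

theorem actA_inj_aux (M : Mealy Q A) (hinv : M.Invertible) :
    ∀ (x : List A) (q : Q) (y : List A), M.actA q x = M.actA q y → x = y := by
  intro x
  induction x with
  | nil =>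
    intro q y h
    cases y with
    | nil => rfl
    | cons b y => simp [actA] at h
  | cons a x ih =>
    intro q y h
    cases y with
    | nil => simp [actA] at h
    | cons b y =>
      simp only [actA, List.cons.injEq] at h
      obtain ⟨h1, h2⟩ := h
      have hab : a = b := (hinv q).1 h1
      subst hab
      exact congrArg (a :: ·) (ih _ _ h2)

theorem actA_injective (M : Mealy Q A) (hinv : M.Invertible) (q : Q) :
    Function.Injective (M.actA q) := fun x y h => M.actA_inj_aux hinv x q y h

theorem enriched_o_inl [Nonempty A] (M : Mealy Q A) (q : Q) (a : A) :
    M.enriched.o (Sum.inl q) a = M.o q a := rfl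

theorem enriched_t_inl [Nonempty A] (M : Mealy Q A) (q : Q) (a : A) :
    M.enriched.t (Sum.inl q) a = Sum.inl (M.t q a) := rfl

theorem enriched_o_inr [Nonempty A] (M : Mealy Q A) (q : Q) (b : A) :
    M.enriched.o (Sum.inr q) b = Function.invFun (M.o q) b := rfl

theorem enriched_t_inr [Nonempty A] (M : Mealy Q A) (q : Q) (b : A) :
    M.enriched.t (Sum.inr q) b = Sum.inr (M.t q (Function.invFun (M.o q) b)) := rfl

theorem enriched_actA_inl [Nonempty A] (M : Mealy Q A) (q : Q) (w : List A) :
    M.enriched.actA (Sum.inl q) w = M.actA q w := by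
  induction w generalizing q with
  | nil => rfl
  | cons a w ih =>
    show M.enriched.o (Sum.inl q) a ::
        M.enriched.actA (M.enriched.t (Sum.inl q) a) w = M.o q a :: M.actA (M.t q a) w
    rw [enriched_o_inl, enriched_t_inl, ih]

theorem actA_enriched_inr [Nonempty A] (M : Mealy Q A) (hinv : M.Invertible)
    (q : Q) (w : List A) :
    M.actA q (M.enriched.actA (Sum.inr q) w) = w := by
  induction w generalizing q with
  | nil => rfl
  | cons b w ih =>
    show M.actA q (M.enriched.o (Sum.inr q) b ::
        M.enriched.actA (M.enriched.t (Sum.inr q) b) w) = b :: w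
    rw [enriched_o_inr, enriched_t_inr]
    show M.o q (Function.invFun (M.o q) b) :: M.actA (M.t q (Function.invFun (M.o q) b))
        (M.enriched.actA (Sum.inr (M.t q (Function.invFun (M.o q) b))) w) = b :: w
    rw [Function.rightInverse_invFun (hinv q).2 b, ih]

theorem actW_replicate (M : Mealy Q A) (q : Q) (k : ℕ) (w : List A) :
    M.actW (List.replicate k q) w = (M.actA q)^[k] w := by
  induction k with
  | zero => rfl
  | succ k ih =>
    simp [List.replicate_succ, actW, ih, Function.iterate_succ_apply']

theorem exists_inverse_word [Nonempty A] [Fintype A] (M : Mealy Q A)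
    (hinv : M.Invertible) (q : Q) (n : ℕ) :
    ∃ t : List Q, ∀ w : List A, w.length ≤ n →
      M.enriched.actA (Sum.inr q) w = M.actW t w := by
  classical
  haveI : Finite {l : List A // l.length ≤ n} :=
    @Finite.of_equiv _ _ (List.finite_length_le A n).to_subtype (Equiv.refl _)
  let f : {l : List A // l.length ≤ n} → {l : List A // l.length ≤ n} :=
    fun x => ⟨M.actA q x.1, by rw [actA_length]; exact x.2⟩
  have hfi : Function.Injective f := by
    intro x y h
    exact Subtype.ext (M.actA_injective hinv q (congrArg Subtype.val h))
  have hfb : Function.Bijective f := (Finite.injective_iff_bijective).1 hfi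
  let e : Equiv.Perm {l : List A // l.length ≤ n} := Equiv.ofBijective f hfb
  have hiter : ∀ (k : ℕ) (x), (e ^ k) x = f^[k] x := by
    intro k
    induction k with
    | zero => intro x; simp
    | succ k ih =>
      intro x
      rw [pow_succ, Equiv.Perm.mul_apply, Function.iterate_succ_apply, ih (e x)]
      rfl
  have hval : ∀ (k : ℕ) (x), (f^[k] x).1 = (M.actA q)^[k] x.1 := by
    intro k
    induction k with
    | zero => intro x; rfl
    | succ k ih =>
      intro x
      rw [Function.iterate_succ_apply, Function.iterate_succ_apply, ih]
  have hmpos : 0 < orderOf e := orderOf_pos e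
  have hem : e ^ orderOf e = 1 := pow_orderOf_eq_one e
  refine ⟨List.replicate (orderOf e - 1) q, fun w hw => ?_⟩
  have hgw : M.actA q (M.enriched.actA (Sum.inr q) w) = w := M.actA_enriched_inr hinv q w
  have hglen : (M.enriched.actA (Sum.inr q) w).length ≤ n := by
    rw [actA_length]; exact hw
  have hx : ∀ x, f^[orderOf e] x = x := by
    intro x; rw [← hiter (orderOf e) x, hem]; rfl
  have hsum : 1 + (orderOf e - 1) = orderOf e := by omega
  have key : f^[orderOf e - 1] ⟨w, hw⟩ = ⟨M.enriched.actA (Sum.inr q) w, hglen⟩ := by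
    apply hfi
    have : f (f^[orderOf e - 1] ⟨w, hw⟩) = (⟨w, hw⟩ : {l : List A // l.length ≤ n}) := by
      calc f (f^[orderOf e - 1] ⟨w, hw⟩) = f^[1 + (orderOf e - 1)] ⟨w, hw⟩ :=
            (Function.iterate_add_apply f 1 (orderOf e - 1) ⟨w, hw⟩).symm
        _ = f^[orderOf e] ⟨w, hw⟩ := by rw [hsum]
        _ = ⟨w, hw⟩ := hx _
    rw [this]
    exact Subtype.ext hgw.symm
  have key2 := congrArg Subtype.val key
  rw [hval (orderOf e - 1) ⟨w, hw⟩] at key2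
  rw [actW_replicate]
  exact key2.symm

theorem exists_state_word [Nonempty A] [Fintype A] (M : Mealy Q A)
    (hinv : M.Invertible) (n : ℕ) (p : Q ⊕ Q) :
    ∃ t : List Q, ∀ w : List A, w.length ≤ n →
      M.enriched.actA p w = M.actW t w := by
  cases p with
  | inl q =>
    exact ⟨[q], fun w _ => by
      rw [enriched_actA_inl]; simp [actW]⟩
  | inr q => exact M.exists_inverse_word hinv q n

theorem exists_word_le [Nonempty A] [Fintype A] (M : Mealy Q A)
    (hinv : M.Invertible) (n : ℕ) (s : List (Q ⊕ Q)) :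
    ∃ t : List Q, ∀ w : List A, w.length ≤ n →
      M.enriched.actW s w = M.actW t w := by
  induction s with
  | nil => exact ⟨[], fun w _ => rfl⟩
  | cons p s ih =>
    obtain ⟨ts, hts⟩ := ih
    obtain ⟨tp, htp⟩ := M.exists_state_word hinv n p
    refine ⟨tp ++ ts, fun w hw => ?_⟩
    rw [actW_append_states]
    have h1 : M.enriched.actW s w = M.actW ts w := hts w hw
    have h2 : (M.actW ts w).length ≤ n := by rw [actW_length]; exact hw
    calc M.enriched.actW (p :: s) w
        = M.enriched.actA p (M.enriched.actW s w) := rfl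
      _ = M.enriched.actA p (M.actW ts w) := by rw [h1]
      _ = M.actW tp (M.actW ts w) := htp _ h2

end Mealy

/-- For an invertible Mealy automaton `M` and a finite set `V ⊂ A*`,
every word `s` over the enriched state set acts on all of `V` like some word `t ∈ Q*`. -/
theorem stmt9 {Q A : Type*} [Fintype Q] [Nonempty Q] [Fintype A] [Nonempty A]
    (M : Mealy Q A) (hinv : M.Invertible) (V : Set (List A)) (hV : V.Finite) :
    ∀ s : List (Q ⊕ Q), ∃ t : List Q, ∀ v ∈ V,
      (M.enriched).actW s v = M.actW t v := by
  classical
  intro s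
  set n := hV.toFinset.sup List.length with hn
  obtain ⟨t, ht⟩ := M.exists_word_le hinv n s
  exact ⟨t, fun v hv => ht v (Finset.le_sup (hV.mem_toFinset.2 hv))⟩

end AutGrp
end

section
/- Let M = (Q, A, τ) be a Mealy automaton. Then the automaton semigroup P_M is finite if and only if the dual automaton semigroup D_M is finite. -/
namespace AutGrp

section Aux

variable {Q A : Type*}

theorem aux_actA_length (M : Mealy Q A) (q : Q) (u : List A) :
    (M.actA q u).length = u.length := by
  induction u generalizing q with
  | nil => rfl
  | cons a w ih => simp [Mealy.actA, ih]

theorem aux_actW_length (M : Mealy Q A) (s : List Q) (u : List A) :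
    (M.actW s u).length = u.length := by
  induction s with
  | nil => rfl
  | cons q s ih => simp [Mealy.actW, aux_actA_length, ih]

theorem aux_actW_nil (M : Mealy Q A) (s : List Q) : M.actW s [] = [] :=
  List.length_eq_zero_iff.mp (by simp [aux_actW_length])

theorem aux_eq_of_getD {l₁ l₂ : List A} (d : A) (h1 : l₁.length = 1) (h2 : l₂.length = 1)
    (h : l₁.getD 0 d = l₂.getD 0 d) : l₁ = l₂ := by
  obtain ⟨a, rfl⟩ := List.length_eq_one_iff.mp h1
  obtain ⟨b, rfl⟩ := List.length_eq_one_iff.mp h2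
  simpa using h

/-- `Ψ_u([s], q) = q @ (s · u)`. -/
noncomputable def psi (M : Mealy Q A) (u : List A) (p : M.PM) (q : Q) : Q :=
  Quotient.liftOn p (fun s => M.stA q (M.actW s.toList u))
    (fun s t h => by show M.stA q (M.actW s.toList u) = M.stA q (M.actW t.toList u); rw [h u])

/-- The map `D_M → (P_M → Q → Q)` determining an element of the dual semigroup. -/
noncomputable def psiD (M : Mealy Q A) (d : M.DM) : M.PM → Q → Q :=
  Quotient.liftOn d (fun u => psi M u.toList)
    (fun u v h => by
      funext p q
      refine Quotient.inductionOn p (fun s => ?_)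
      show M.stA q (M.actW s.toList u.toList) = M.stA q (M.actW s.toList v.toList)
      have h2 := h (q :: s.toList)
      simp only [Mealy.stW, List.cons.injEq] at h2
      exact h2.1)

theorem psiD_mk (M : Mealy Q A) (u : List A) (s : List Q) (q : Q) :
    psiD M (M.DMmk u) (M.PMmk s) q = M.stA q (M.actW s u) := by
  show M.stA q (M.actW (FreeMonoid.ofList s).toList (FreeMonoid.ofList u).toList) = _
  simp

theorem psiD_injective (M : Mealy Q A) : Function.Injective (psiD M) := by
  intro d₁ d₂ h
  refine Quotient.inductionOn₂ d₁ d₂ (fun u v h => ?_) h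
  refine Quotient.sound (fun s => ?_)
  induction s with
  | nil => rfl
  | cons q s ih =>
    show M.stA q (M.actW s u.toList) :: M.stW s u.toList
        = M.stA q (M.actW s v.toList) :: M.stW s v.toList
    have h1 : psiD M (M.DMmk u.toList) (M.PMmk s) q = psiD M (M.DMmk v.toList) (M.PMmk s) q := by
      have : M.DMmk u.toList = (⟦u⟧ : M.DM) := by
        simp [Mealy.DMmk, Con.mk']; rfl
      have hv : M.DMmk v.toList = (⟦v⟧ : M.DM) := by
        simp [Mealy.DMmk, Con.mk']; rfl
      rw [this, hv, h]
    rw [psiD_mk, psiD_mk] at h1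
    rw [h1, ih]

/-- `Θ_s([u], a)` : the letter `(s @ u) · a`. -/
noncomputable def theta [Nonempty A] (M : Mealy Q A) (s : List Q) (d : M.DM) (a : A) : A :=
  Quotient.liftOn d
    (fun u => (M.actW (M.stW s u.toList) [a]).getD 0 (Classical.arbitrary A))
    (fun u v h => by
      show (M.actW (M.stW s u.toList) [a]).getD 0 _ = (M.actW (M.stW s v.toList) [a]).getD 0 _
      rw [h s])

/-- The map `P_M → (D_M → A → A)` determining an element of the automaton semigroup. -/
noncomputable def thetaP [Nonempty A] (M : Mealy Q A) (p : M.PM) : M.DM → A → A :=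
  Quotient.liftOn p (fun s => theta M s.toList)
    (fun s t h => by
      funext d a
      refine Quotient.inductionOn d (fun u => ?_)
      show (M.actW (M.stW s.toList u.toList) [a]).getD 0 _
          = (M.actW (M.stW t.toList u.toList) [a]).getD 0 _
      rw [M.actW_stW_congr h u.toList [a]])

theorem thetaP_mk [Nonempty A] (M : Mealy Q A) (s : List Q) (u : List A) (a : A) :
    thetaP M (M.PMmk s) (M.DMmk u) a
      = (M.actW (M.stW s u) [a]).getD 0 (Classical.arbitrary A) := by
  show (M.actW (M.stW (FreeMonoid.ofList s).toList (FreeMonoid.ofList u).toList) [a]).getD 0 _ = _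
  simp

theorem thetaP_injective [Nonempty A] (M : Mealy Q A) : Function.Injective (thetaP M) := by
  intro p₁ p₂ h
  refine Quotient.inductionOn₂ p₁ p₂ (fun s t h => ?_) h
  refine Quotient.sound (fun w => ?_)
  induction w using List.reverseRecOn with
  | nil => rw [aux_actW_nil, aux_actW_nil]
  | append_singleton w a ih =>
    rw [M.actW_append, M.actW_append, ih]
    congr 1
    have h1 : thetaP M (M.PMmk s.toList) (M.DMmk w) a
        = thetaP M (M.PMmk t.toList) (M.DMmk w) a := by
      have hs : M.PMmk s.toList = (⟦s⟧ : M.PM) := by simp [Mealy.PMmk, Con.mk']; rfl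
      have ht : M.PMmk t.toList = (⟦t⟧ : M.PM) := by simp [Mealy.PMmk, Con.mk']; rfl
      rw [hs, ht, h]
    rw [thetaP_mk, thetaP_mk] at h1
    exact aux_eq_of_getD _ (by simp [aux_actW_length]) (by simp [aux_actW_length]) h1

end Aux

/-- For a Mealy automaton `M`, the automaton semigroup `P_M` is finite
iff the dual automaton semigroup `D_M` is finite. -/
theorem stmt12 {Q A : Type*} [Fintype Q] [Nonempty Q] [Fintype A] [Nonempty A]
    (M : Mealy Q A) :
    Finite M.PM ↔ Finite M.DM := by
  constructor
  · intro hP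
    haveI := hP
    exact Finite.of_injective (psiD M) (psiD_injective M)
  · intro hD
    haveI := hD
    exact Finite.of_injective (thetaP M) (thetaP_injective M)

end AutGrp
end

section
/- Let M = (Q, A, τ) be a self-invertible Mealy automaton, let a ∈ A, and let Lan(a) = ⋃_{k ≥ 0} { s·aᵏ : s ∈ Q* }. Then there exist natural numbers T and d such that: (i) every v ∈ Lan(a) with |v| ≥ T has degree exactly d in Lan(a); and (ii) for every word v ∈ A*, v ∈ Lan(a) if and only if every subword of v of length at most T + 1 belongs to Lan(a). -/
namespace AutGrp

namespace Mealy

variable {Q A : Type*}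

/-- The single-letter action of a word of states. -/
def oW (M : Mealy Q A) : List Q → A → A
  | [], b => b
  | q :: s, b => M.o q (M.oW s b)

theorem actW_singleton (M : Mealy Q A) (s : List Q) (b : A) :
    M.actW s [b] = [M.oW s b] := by
  induction s with
  | nil => rfl
  | cons q s ih => simp [actW, ih, oW, actA]

/-- Every word of states admits an inverse word (as actions) when `P_M` is a group. -/
theorem exists_inv {M : Mealy Q A} (hg : M.SelfInvertible) (s : List Q) :
    ∃ t : List Q, (∀ u, M.actW s (M.actW t u) = u) ∧ (∀ u, M.actW t (M.actW s u) = u) := by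
  obtain ⟨y, h1, h2⟩ := hg (M.PMmk s)
  obtain ⟨m, rfl⟩ := Con.mk'_surjective (c := M.conQ) y
  have h1' : M.conQ (FreeMonoid.ofList s * m) 1 := by
    refine (Con.eq _).mp ?_
    show M.conQ.mk' (FreeMonoid.ofList s * m) = M.conQ.mk' 1
    rw [map_mul, map_one]; exact h1
  have h2' : M.conQ (m * FreeMonoid.ofList s) 1 := by
    refine (Con.eq _).mp ?_
    show M.conQ.mk' (m * FreeMonoid.ofList s) = M.conQ.mk' 1
    rw [map_mul, map_one]; exact h2
  refine ⟨FreeMonoid.toList m, fun u => ?_, fun u => ?_⟩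
  · have := h1' u
    simpa [conQ, FreeMonoid.toList_mul, actW_append_states, actW] using this
  · have := h2' u
    simpa [conQ, FreeMonoid.toList_mul, actW_append_states, actW] using this

theorem act_mem (M : Mealy Q A) {a : A} (s' : List Q) {v : List A} (hv : v ∈ M.Lan a) :
    M.actW s' v ∈ M.Lan a := by
  obtain ⟨k, s, rfl⟩ := hv
  exact ⟨k, s' ++ s, (M.actW_append_states s' s _).symm⟩

theorem append_mem (M : Mealy Q A) {a : A} {x y : List A} (h : x ++ y ∈ M.Lan a) :
    x ∈ M.Lan a ∧ y ∈ M.Lan a := by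
  obtain ⟨k, s, hxy⟩ := h
  have hk : k = x.length + y.length := by
    have := congrArg List.length hxy
    simp [actW_length] at this
    omega
  subst hk
  rw [List.replicate_add, actW_append] at hxy
  have hlen : x.length = (M.actW s (List.replicate x.length a)).length := by
    simp [actW_length]
  obtain ⟨h1, h2⟩ := List.append_inj hxy hlen
  exact ⟨⟨x.length, s, h1⟩, ⟨y.length, _, h2⟩⟩

theorem infix_mem (M : Mealy Q A) {a : A} {w v : List A} (h : w <:+: v) (hv : v ∈ M.Lan a) :
    w ∈ M.Lan a := by
  obtain ⟨p, q, rfl⟩ := h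
  have h1 := (M.append_mem (by rwa [List.append_assoc] at hv)).2
  exact (M.append_mem h1).1

theorem deg_act [Fintype A] (M : Mealy Q A) (hg : M.SelfInvertible) (a : A) (s : List Q) (k : ℕ) :
    M.deg a (M.actW s (List.replicate k a)) = M.deg a (List.replicate k a) := by
  obtain ⟨t, hst, hts⟩ := exists_inv hg s
  set R := List.replicate k a with hR
  set v := M.actW s R with hv
  set f := M.oW (M.stW s R) with hfdef
  set g := M.oW (M.stW t v) with hgdef
  have hf : ∀ b : A, M.actW s (R ++ [b]) = v ++ [f b] := by
    intro b; rw [actW_append, actW_singleton]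
  have htv : M.actW t v = R := hts R
  have hg' : ∀ c : A, M.actW t (v ++ [c]) = R ++ [g c] := by
    intro c; rw [actW_append, actW_singleton, htv]
  have hgf : ∀ b : A, g (f b) = b := by
    intro b
    have h1 : M.actW t (v ++ [f b]) = R ++ [g (f b)] := hg' _
    have h2 : M.actW t (v ++ [f b]) = R ++ [b] := by rw [← hf b, hts]
    have h3 := List.append_cancel_left (h1.symm.trans h2)
    simpa using h3
  have hfg : ∀ c : A, f (g c) = c := by
    intro c
    have h1 : M.actW s (R ++ [g c]) = v ++ [f (g c)] := hf _
    have h2 : M.actW s (R ++ [g c]) = v ++ [c] := by rw [← hg' c, hst]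
    have h3 := List.append_cancel_left (h1.symm.trans h2)
    simpa using h3
  have hmem1 : ∀ b ∈ {b : A | R ++ [b] ∈ M.Lan a}, f b ∈ {c : A | v ++ [c] ∈ M.Lan a} := by
    intro b hb
    have := M.act_mem s hb
    rwa [hf b] at this
  have hmem2 : ∀ c ∈ {c : A | v ++ [c] ∈ M.Lan a}, g c ∈ {b : A | R ++ [b] ∈ M.Lan a} := by
    intro c hc
    have := M.act_mem t hc
    rwa [hg' c] at this
  have hinjf : Set.InjOn f {b : A | R ++ [b] ∈ M.Lan a} :=
    (Function.LeftInverse.injective hgf).injOn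
  have hinjg : Set.InjOn g {c : A | v ++ [c] ∈ M.Lan a} :=
    (Function.LeftInverse.injective hfg).injOn
  have le1 := Set.ncard_le_ncard_of_injOn f hmem1 hinjf (Set.toFinite _)
  have le2 := Set.ncard_le_ncard_of_injOn g hmem2 hinjg (Set.toFinite _)
  exact le_antisymm le2 le1

theorem deg_mem [Fintype A] (M : Mealy Q A) (hg : M.SelfInvertible) {a : A} {v : List A}
    (hv : v ∈ M.Lan a) : M.deg a v = M.deg a (List.replicate v.length a) := by
  obtain ⟨k, s, rfl⟩ := hv
  have hl : (M.actW s (List.replicate k a)).length = k := by simp [actW_length]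
  rw [hl]
  exact M.deg_act hg a s k

theorem deg_rep_succ_le [Fintype A] (M : Mealy Q A) (a : A) (k : ℕ) :
    M.deg a (List.replicate (k + 1) a) ≤ M.deg a (List.replicate k a) := by
  apply Set.ncard_le_ncard _ (Set.toFinite _)
  intro b hb
  simp only [Set.mem_setOf_eq] at hb ⊢
  have heq : List.replicate (k + 1) a ++ [b] = [a] ++ (List.replicate k a ++ [b]) := by
    simp [List.replicate_succ]
  rw [heq] at hb
  exact (M.append_mem hb).2

end Mealy

/-- For a self-invertible Mealy automaton `M` and a letter `a`, there are
`T, d ∈ ℕ` such that every `v ∈ Lan(a)` with `|v| ≥ T` has degree exactly `d`, and a word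
belongs to `Lan(a)` iff all its subwords of length at most `T + 1` do. -/
theorem stmt15 {Q A : Type*} [Fintype Q] [Nonempty Q] [Fintype A] [Nonempty A]
    (M : Mealy Q A) (hg : M.SelfInvertible) (a : A) :
    ∃ T d : ℕ,
      (∀ v ∈ M.Lan a, T ≤ v.length → M.deg a v = d) ∧
      (∀ v : List A, v ∈ M.Lan a ↔
        ∀ w : List A, w <:+: v → w.length ≤ T + 1 → w ∈ M.Lan a) := by
  classical
  set dseq : ℕ → ℕ := fun k => M.deg a (List.replicate k a) with hdseq
  have anti : ∀ j k : ℕ, j ≤ k → dseq k ≤ dseq j := by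
    intro j k h
    induction h with
    | refl => exact le_rfl
    | step h ih => exact le_trans (M.deg_rep_succ_le a _) ih
  have hne : (Set.range dseq).Nonempty := ⟨dseq 0, 0, rfl⟩
  obtain ⟨K, hK⟩ := Nat.sInf_mem hne
  have hconst : ∀ k : ℕ, K ≤ k → dseq k = dseq K := by
    intro k hk
    refine le_antisymm (anti K k hk) ?_
    rw [hK]
    exact Nat.sInf_le ⟨k, rfl⟩
  refine ⟨K, dseq K, ?_, ?_⟩
  · intro v hv hlen
    rw [M.deg_mem hg hv]
    exact hconst v.length hlen
  · intro v
    constructor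
    · intro hv w hw _
      exact M.infix_mem hw hv
    · intro h
      induction v using List.reverseRecOn with
      | nil => exact ⟨0, [], rfl⟩
      | append_singleton v' b ih =>
        have hv' : v' ∈ M.Lan a := by
          refine ih ?_
          intro w hw hlen
          exact h w (hw.trans (List.prefix_append v' [b]).isInfix) hlen
        by_cases hT : (v' ++ [b]).length ≤ K + 1
        · exact h _ (List.infix_refl _) hT
        · have hlen' : K + 1 ≤ v'.length := by
            simp only [List.length_append, List.length_singleton] at hT
            omega
          set w := v'.drop (v'.length - K) with hwdef
          have hwlen : w.length = K := by
            rw [hwdef, List.length_drop]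
            omega
          obtain ⟨u, hu⟩ := List.drop_suffix (v'.length - K) v'
          have hwv : w ∈ M.Lan a := by
            exact M.infix_mem (List.IsSuffix.isInfix ⟨u, hu⟩) hv'
          have hkey : w ++ [b] ∈ M.Lan a := by
            refine h _ ?_ (by simp [hwlen])
            refine List.IsSuffix.isInfix ⟨u, ?_⟩
            rw [← List.append_assoc, hu]
          have hsub : {c : A | v' ++ [c] ∈ M.Lan a} ⊆ {c : A | w ++ [c] ∈ M.Lan a} := by
            intro c hc
            have hsuf : w ++ [c] <:+ v' ++ [c] := ⟨u, by rw [← List.append_assoc, hu]⟩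
            exact M.infix_mem hsuf.isInfix hc
          have hc1 : {c : A | v' ++ [c] ∈ M.Lan a}.ncard = dseq K := by
            have h1 : M.deg a v' = dseq v'.length := M.deg_mem hg hv'
            have h2 : dseq v'.length = dseq K := hconst v'.length (by omega)
            exact (h1.trans h2 : M.deg a v' = dseq K)
          have hc2 : {c : A | w ++ [c] ∈ M.Lan a}.ncard = dseq K := by
            have h1 : M.deg a w = dseq w.length := M.deg_mem hg hwv
            rw [hwlen] at h1
            exact h1
          have heq := Set.eq_of_subset_of_ncard_le hsub (by rw [hc1, hc2]) (Set.toFinite _)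
          have hb : b ∈ {c : A | w ++ [c] ∈ M.Lan a} := hkey
          rw [← heq] at hb
          exact hb

end AutGrp
end
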